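/- (Corollary 1) Let (x^k, y^k, γ^k) be iterates of the two-block linearized ADMM (Algorithm 1): x^{k+1} is a global minimizer of f̄^k, y^{k+1} is a global minimizer of h̄^k, and γ^{k+1} = γ^k + β(Ax^{k+1} + By^{k+1}), under Assumption 1 with the parameter choice (★), and suppose additionally that g does not depend on y (i.e. g(x, y) = g(x) for all y). Then the dual variable sequence {γ^k} is bounded. -/

import Mathlib

open Matrix Filter
open scoped RealInnerProductSpace

noncomputable section

abbrev Vec (m : ℕ) := EuclideanSpace ℝ (Fin m)

def mv {m l : ℕ} (M : Matrix (Fin m) (Fin l) ℝ) (v : Vec l) : Vec m := WithLp.toLp 2 (M.mulVec v)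

def gradx {p q : ℕ} (g : Vec p → Vec q → ℝ) (x : Vec p) (y : Vec q) : Vec p :=
  gradient (fun x' => g x' y) x

def grady {p q : ℕ} (g : Vec p → Vec q → ℝ) (x : Vec p) (y : Vec q) : Vec q :=
  gradient (g x) y

def LipschitzDifferentiable {m : ℕ} (h : Vec m → ℝ) (L : ℝ) : Prop :=
  Differentiable ℝ h ∧ ∀ y y' : Vec m, ‖gradient h y - gradient h y'‖ ≤ L * ‖y - y'‖

def LipschitzDifferentiable2 {p q : ℕ} (g : Vec p → Vec q → ℝ) (L : ℝ) : Prop :=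
  (∀ y, Differentiable ℝ fun x => g x y) ∧ (∀ x, Differentiable ℝ (g x)) ∧
    ∀ x x' : Vec p, ∀ y y' : Vec q,
      Real.sqrt (‖gradx g x y - gradx g x' y'‖ ^ 2 + ‖grady g x y - grady g x' y'‖ ^ 2) ≤
        L * Real.sqrt (‖x - x'‖ ^ 2 + ‖y - y'‖ ^ 2)

def Lagr {p q n : ℕ} (β : ℝ) (g : Vec p → Vec q → ℝ) (f : Vec p → ℝ) (h : Vec q → ℝ)
    (A : Matrix (Fin n) (Fin p) ℝ) (B : Matrix (Fin n) (Fin q) ℝ)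
    (x : Vec p) (y : Vec q) (γ : Vec n) : ℝ :=
  g x y + f x + h y + ⟪γ, mv A x + mv B y⟫ + β / 2 * ‖mv A x + mv B y‖ ^ 2

def fbar {p q n : ℕ} (f : Vec p → ℝ) (g : Vec p → Vec q → ℝ)
    (A : Matrix (Fin n) (Fin p) ℝ) (B : Matrix (Fin n) (Fin q) ℝ) (β Lx : ℝ)
    (xk : Vec p) (yk : Vec q) (γk : Vec n) (x : Vec p) : ℝ :=
  f x + ⟪γk, mv A x⟫ + Lx / 2 * ‖x - xk‖ ^ 2 +
    ⟪x - xk, gradx g xk yk + β • mv Aᵀ (mv A xk + mv B yk)⟫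

def hbar {p q n : ℕ} (g : Vec p → Vec q → ℝ) (h : Vec q → ℝ)
    (A : Matrix (Fin n) (Fin p) ℝ) (B : Matrix (Fin n) (Fin q) ℝ) (β Ly : ℝ)
    (xk1 : Vec p) (yk : Vec q) (γk : Vec n) (y : Vec q) : ℝ :=
  ⟪γk, mv B y⟫ + Ly / 2 * ‖y - yk‖ ^ 2 + β / 2 * ‖mv A xk1 + mv B y‖ ^ 2 +
    ⟪y - yk, grady g xk1 yk + gradient h yk⟫

def IsSmallestEigenvalue {m : ℕ} (M : Matrix (Fin m) (Fin m) ℝ) (lam : ℝ) : Prop :=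
  (∃ v : Fin m → ℝ, v ≠ 0 ∧ M.mulVec v = lam • v) ∧
    ∀ μ : ℝ, (∃ v : Fin m → ℝ, v ≠ 0 ∧ M.mulVec v = μ • v) → lam ≤ μ

def IsLargestEigenvalue {m : ℕ} (M : Matrix (Fin m) (Fin m) ℝ) (lam : ℝ) : Prop :=
  (∃ v : Fin m → ℝ, v ≠ 0 ∧ M.mulVec v = lam • v) ∧
    ∀ μ : ℝ, (∃ v : Fin m → ℝ, v ≠ 0 ∧ M.mulVec v = μ • v) → μ ≤ lam

def RegularSubgradientAt {m : ℕ} (f : Vec m → ℝ) (x₀ v : Vec m) : Prop :=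
  ∀ ε > 0, ∀ᶠ x in nhds x₀, f x₀ + ⟪v, x - x₀⟫ - ε * ‖x - x₀‖ ≤ f x

lemma mv_add {m l : ℕ} (M : Matrix (Fin m) (Fin l) ℝ) (u v : Vec l) :
    mv M (u + v) = mv M u + mv M v := by
  simp [mv, Matrix.mulVec_add]

lemma mv_smul {m l : ℕ} (M : Matrix (Fin m) (Fin l) ℝ) (c : ℝ) (v : Vec l) :
    mv M (c • v) = c • mv M v := by
  simp [mv, Matrix.mulVec_smul]

lemma mv_sub {m l : ℕ} (M : Matrix (Fin m) (Fin l) ℝ) (u v : Vec l) :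
    mv M (u - v) = mv M u - mv M v := by
  rw [sub_eq_add_neg, ← neg_one_smul ℝ v, mv_add, mv_smul, neg_one_smul, ← sub_eq_add_neg]

lemma inner_mv {m l : ℕ} (M : Matrix (Fin m) (Fin l) ℝ) (u : Vec m) (v : Vec l) :
    ⟪mv Mᵀ u, v⟫ = ⟪u, mv M v⟫ := by
  simp only [mv, PiLp.inner_apply, RCLike.inner_apply, conj_trivial, Matrix.mulVec,
    dotProduct, Matrix.transpose_apply, Finset.sum_mul, Finset.mul_sum]
  rw [Finset.sum_comm]
  congr 1; ext i; congr 1; ext j; ring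

lemma inner_mv_symm {m : ℕ} (M : Matrix (Fin m) (Fin m) ℝ) (hM : Mᵀ = M) (u v : Vec m) :
    ⟪mv M u, v⟫ = ⟪u, mv M v⟫ := by rw [← hM, inner_mv, hM]

lemma herm_quad_expand {m : ℕ} (M : Matrix (Fin m) (Fin m) ℝ) (hM : M.IsHermitian)
    (v : Vec m) :
    ⟪v, mv M v⟫ = ∑ i, hM.eigenvalues i * (⟪hM.eigenvectorBasis i, v⟫ * ⟪hM.eigenvectorBasis i, v⟫)
    ∧ ‖v‖ ^ 2 = ∑ i, ⟪hM.eigenvectorBasis i, v⟫ * ⟪hM.eigenvectorBasis i, v⟫ := by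
  have hsymm : Mᵀ = M := by
    have := hM; rwa [Matrix.IsHermitian, Matrix.conjTranspose_eq_transpose_of_trivial] at this
  have hpar : ∀ w : Vec m, ⟪v, w⟫ = ∑ i, ⟪v, hM.eigenvectorBasis i⟫ * ⟪hM.eigenvectorBasis i, w⟫ :=
    fun w => ((hM.eigenvectorBasis).sum_inner_mul_inner v w).symm
  have hsym : ∀ (a b : Vec m), ⟪a, b⟫ = ⟪b, a⟫ := fun a b => real_inner_comm b a
  constructor
  · rw [hpar (mv M v)]
    congr 1; ext i
    have : ⟪hM.eigenvectorBasis i, mv M v⟫ = hM.eigenvalues i * ⟪hM.eigenvectorBasis i, v⟫ := by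
      rw [← inner_mv_symm M hsymm]
      have h2 : mv M (hM.eigenvectorBasis i) = hM.eigenvalues i • (hM.eigenvectorBasis i : Vec m) :=
        by unfold mv; rw [hM.mulVec_eigenvectorBasis i]; rfl
      rw [h2, real_inner_smul_left]
    rw [this, hsym v]; ring
  · rw [← real_inner_self_eq_norm_sq, hpar v]
    congr 1; ext i; rw [hsym v]

lemma herm_quad_le {m : ℕ} (M : Matrix (Fin m) (Fin m) ℝ) (hM : M.IsHermitian) (c : ℝ)
    (hc : ∀ μ : ℝ, (∃ v : Fin m → ℝ, v ≠ 0 ∧ M.mulVec v = μ • v) → μ ≤ c) (v : Vec m) :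
    ⟪v, mv M v⟫ ≤ c * ‖v‖ ^ 2 := by
  obtain ⟨h1, h2⟩ := herm_quad_expand M hM v
  rw [h1, h2, Finset.mul_sum]
  refine Finset.sum_le_sum fun i _ => ?_
  have hev : hM.eigenvalues i ≤ c := by
    refine hc _ ⟨hM.eigenvectorBasis i, ?_, hM.mulVec_eigenvectorBasis i⟩
    intro h0; apply hM.eigenvectorBasis.orthonormal.ne_zero i
    exact congrArg (WithLp.toLp 2) h0
  exact mul_le_mul_of_nonneg_right hev (mul_self_nonneg _)

lemma herm_quad_ge {m : ℕ} (M : Matrix (Fin m) (Fin m) ℝ) (hM : M.IsHermitian) (c : ℝ)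
    (hc : ∀ μ : ℝ, (∃ v : Fin m → ℝ, v ≠ 0 ∧ M.mulVec v = μ • v) → c ≤ μ) (v : Vec m) :
    c * ‖v‖ ^ 2 ≤ ⟪v, mv M v⟫ := by
  obtain ⟨h1, h2⟩ := herm_quad_expand M hM v
  rw [h1, h2, Finset.mul_sum]
  refine Finset.sum_le_sum fun i _ => ?_
  have hev : c ≤ hM.eigenvalues i := by
    refine hc _ ⟨hM.eigenvectorBasis i, ?_, hM.mulVec_eigenvectorBasis i⟩
    intro h0; apply hM.eigenvectorBasis.orthonormal.ne_zero i
    exact congrArg (WithLp.toLp 2) h0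
  exact mul_le_mul_of_nonneg_right hev (mul_self_nonneg _)

lemma norm_mv_sq_eq {m l : ℕ} (M : Matrix (Fin m) (Fin l) ℝ) (v : Vec l) :
    ⟪v, mv (Mᵀ * M) v⟫ = ‖mv M v‖ ^ 2 := by
  have : mv (Mᵀ * M) v = mv Mᵀ (mv M v) := by
    simp [mv, Matrix.mulVec_mulVec]
  rw [this, ← inner_mv, Matrix.transpose_transpose, real_inner_self_eq_norm_sq]

lemma quadratic_zero (a b : ℝ) (h : ∀ t : ℝ, 0 ≤ t * b + t ^ 2 * a) : b = 0 := by
  by_contra hb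
  have hb2 : 0 < b ^ 2 := by positivity
  set s : ℝ := min 1 (1 / (2 * (|a| + 1))) with hs
  have hspos : 0 < s := by
    apply lt_min one_pos; positivity
  have h1 := h (-(s * b))
  -- 0 ≤ -(s*b)*b + (s*b)^2 * a = s*b^2*(-1 + s*a)
  have hsa : s * a < 1 := by
    have h2 : s ≤ 1 / (2 * (|a| + 1)) := min_le_right _ _
    have h3 : a ≤ |a| := le_abs_self a
    calc s * a ≤ s * |a| := by nlinarith [abs_nonneg a]
      _ ≤ (1 / (2 * (|a| + 1))) * |a| := by nlinarith [abs_nonneg a]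
      _ < 1 := by
          rw [div_mul_eq_mul_div, div_lt_one (by positivity)]
          nlinarith [abs_nonneg a]
  nlinarith [h1, mul_pos (mul_pos hspos hb2) (by linarith : (0:ℝ) < 1 - s * a)]

lemma descent_lemma {m : ℕ} (f : Vec m → ℝ) (L : ℝ) (hL : 0 ≤ L) (hf : Differentiable ℝ f)
    (hlip : ∀ a b : Vec m, ‖gradient f a - gradient f b‖ ≤ L * ‖a - b‖) (x d : Vec m) :
    f (x + d) ≤ f x + ⟪gradient f x, d⟫ + L / 2 * ‖d‖ ^ 2 := by
  have hderiv : ∀ t : ℝ, HasDerivAt (fun t : ℝ => f (x + t • d)) ⟪gradient f (x + t • d), d⟫ t := by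
    intro t
    have hline : HasDerivAt (fun t : ℝ => x + t • d) d t := by
      simpa using ((hasDerivAt_id t).smul_const d).const_add x
    have hgrad := (hf (x + t • d)).hasGradientAt
    have hF : HasFDerivAt f (InnerProductSpace.toDual ℝ (Vec m) (gradient f (x + t • d))) (x + t • d) :=
      hgrad.hasFDerivAt
    have := hF.comp_hasDerivAt t hline
    simp only [InnerProductSpace.toDual_apply_apply] at this; exact this
  set ψ : ℝ → ℝ := fun t => f x + t * ⟪gradient f x, d⟫ + L * t ^ 2 / 2 * ‖d‖ ^ 2 - f (x + t • d)
    with hψ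
  have hψderiv : ∀ t : ℝ, HasDerivAt ψ
      (⟪gradient f x, d⟫ + L * t * ‖d‖ ^ 2 - ⟪gradient f (x + t • d), d⟫) t := by
    intro t
    have h1 : HasDerivAt (fun t : ℝ => f x + t * ⟪gradient f x, d⟫ + L * t ^ 2 / 2 * ‖d‖ ^ 2)
        (⟪gradient f x, d⟫ + L * t * ‖d‖ ^ 2) t := by
      have ha : HasDerivAt (fun t : ℝ => t * ⟪gradient f x, d⟫) ⟪gradient f x, d⟫ t := by
        simpa using (hasDerivAt_id t).mul_const ⟪gradient f x, d⟫
      have hb : HasDerivAt (fun t : ℝ => L * t ^ 2 / 2 * ‖d‖ ^ 2) (L * t * ‖d‖ ^ 2) t := by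
        have : HasDerivAt (fun t : ℝ => t ^ 2) (2 * t) t := by
          simpa using hasDerivAt_pow 2 t
        have := ((this.const_mul L).div_const 2).mul_const (‖d‖ ^ 2)
        rw [show L * t * ‖d‖ ^ 2 = L * (2 * t) / 2 * ‖d‖ ^ 2 by ring]; exact this
      exact (ha.const_add (f x)).add hb
    exact h1.sub (hderiv t)
  have hmono : MonotoneOn ψ (Set.Icc 0 1) := by
    apply monotoneOn_of_deriv_nonneg (convex_Icc 0 1)
    · have hd : Differentiable ℝ ψ := fun t => (hψderiv t).differentiableAt
      exact hd.continuous.continuousOn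
    · intro t ht
      exact (hψderiv t).differentiableAt.differentiableWithinAt
    · intro t ht
      rw [interior_Icc] at ht
      rw [(hψderiv t).deriv]
      have hlip2 : ‖gradient f x - gradient f (x + t • d)‖ ≤ L * (t * ‖d‖) := by
        have := hlip x (x + t • d)
        simpa [norm_smul, abs_of_nonneg (le_of_lt ht.1), mul_assoc] using this
      have hinner : ⟪gradient f x - gradient f (x + t • d), d⟫ ≥ -(L * (t * ‖d‖) * ‖d‖) := by
        have h1 := abs_real_inner_le_norm (gradient f x - gradient f (x + t • d)) d
        have h2 : |⟪gradient f x - gradient f (x + t • d), d⟫| ≤ L * (t * ‖d‖) * ‖d‖ :=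
          le_trans h1 (by nlinarith [norm_nonneg d, norm_nonneg (gradient f x - gradient f (x + t • d))])
        linarith [neg_abs_le ⟪gradient f x - gradient f (x + t • d), d⟫]
      have : ⟪gradient f x, d⟫ - ⟪gradient f (x + t • d), d⟫ = ⟪gradient f x - gradient f (x + t • d), d⟫ := by
        rw [inner_sub_left]
      nlinarith [this, hinner]
  have h01 := hmono (Set.mem_Icc.2 ⟨le_refl 0, zero_le_one⟩) (Set.mem_Icc.2 ⟨zero_le_one, le_refl 1⟩) zero_le_one
  simp only [hψ] at h01
  simp only [zero_smul, add_zero, one_smul, zero_mul, one_mul, zero_pow, mul_zero, one_pow] at h01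
  nlinarith [h01]


lemma hbar_expand {p q n : ℕ} (g : Vec p → Vec q → ℝ) (h : Vec q → ℝ)
    (A : Matrix (Fin n) (Fin p) ℝ) (B : Matrix (Fin n) (Fin q) ℝ) (β Ly : ℝ)
    (x1 : Vec p) (yk : Vec q) (γk : Vec n) (y1 v : Vec q) (t : ℝ) :
    hbar g h A B β Ly x1 yk γk (y1 + t • v) =
      hbar g h A B β Ly x1 yk γk y1 +
      t * ⟪mv Bᵀ γk + Ly • (y1 - yk) + β • mv Bᵀ (mv A x1 + mv B y1) +
           (grady g x1 yk + gradient h yk), v⟫ +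
      t ^ 2 * (Ly / 2 * ‖v‖ ^ 2 + β / 2 * ‖mv B v‖ ^ 2) := by
  have e1 : y1 + t • v - yk = (y1 - yk) + t • v := by abel
  have e2 : mv B (y1 + t • v) = mv B y1 + t • mv B v := by rw [mv_add, mv_smul]
  have e3 : mv A x1 + (mv B y1 + t • mv B v) = (mv A x1 + mv B y1) + t • mv B v := by abel
  simp only [hbar, e1, e2, e3]
  rw [norm_add_sq_real ((y1 - yk)) (t • v), norm_add_sq_real (mv A x1 + mv B y1) (t • mv B v)]
  simp only [inner_add_left, inner_add_right, real_inner_smul_left, real_inner_smul_right,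
    norm_smul, Real.norm_eq_abs, mul_pow, sq_abs]
  rw [inner_mv B γk v, inner_mv B (mv A x1 + mv B y1) v]
  simp only [inner_add_left]
  rw [real_inner_comm v (grady g x1 yk), real_inner_comm v (gradient h yk)]
  ring


lemma mvB_lower_of_range {q n : ℕ} (B : Matrix (Fin n) (Fin q) ℝ) (lamB : ℝ)
    (hSB : ∀ u : Vec q, lamB * ‖u‖ ^ 2 ≤ ‖mv B u‖ ^ 2) (hlamB0 : 0 ≤ lamB) (u : Vec q) :
    lamB * ‖mv B u‖ ^ 2 ≤ ‖mv Bᵀ (mv B u)‖ ^ 2 := by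
  have hcs : ‖mv B u‖ ^ 2 ≤ ‖mv Bᵀ (mv B u)‖ * ‖u‖ := by
    have h1 : ⟪mv Bᵀ (mv B u), u⟫ = ‖mv B u‖ ^ 2 := by
      rw [inner_mv, real_inner_self_eq_norm_sq]
    calc ‖mv B u‖ ^ 2 = ⟪mv Bᵀ (mv B u), u⟫ := h1.symm
      _ ≤ ‖mv Bᵀ (mv B u)‖ * ‖u‖ := real_inner_le_norm _ _
  rcases eq_or_ne (‖mv B u‖) 0 with hz | hz
  · rw [hz]; norm_num
  · have hpos : 0 < ‖mv B u‖ ^ 2 := by positivity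
    have h2 := hSB u
    have h3 : ‖mv B u‖ ^ 2 * ‖mv B u‖ ^ 2 ≤ (‖mv Bᵀ (mv B u)‖ * ‖u‖) * (‖mv Bᵀ (mv B u)‖ * ‖u‖) :=
      mul_le_mul hcs hcs (by positivity) (by positivity)
    nlinarith [h3, mul_le_mul_of_nonneg_left h2 (sq_nonneg (‖mv Bᵀ (mv B u)‖)), hpos, hlamB0,
      mul_nonneg hlamB0 (sq_nonneg ‖u‖)]

set_option maxHeartbeats 1600000 in
theorem statement12 {p q n : ℕ}
    (A : Matrix (Fin n) (Fin p) ℝ) (B : Matrix (Fin n) (Fin q) ℝ)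
    (g : Vec p → Vec q → ℝ) (f : Vec p → ℝ) (h : Vec q → ℝ)
    (Lg Lh Lx Ly β Cm LA lamB : ℝ)
    (x : ℕ → Vec p) (y : ℕ → Vec q) (γ : ℕ → Vec n)
    -- Assumption 1
    (hh : LipschitzDifferentiable h Lh)
    (hg : LipschitzDifferentiable2 g Lg)
    (hlb : ∃ c : ℝ, ∀ (x' : Vec p) (y' : Vec q),
      mv A x' + mv B y' = 0 → c ≤ g x' y' + f x' + h y')
    (hcoercive : ∀ (u : ℕ → Vec p) (v : ℕ → Vec q),
      (∀ k, mv A (u k) + mv B (v k) = 0) →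
      Tendsto (fun k => ‖v k‖) atTop atTop →
      Tendsto (fun k => g (u k) (v k) + f (u k) + h (v k)) atTop atTop)
    (hrank : B.rank = q)
    (himg : Set.range (mv A) ⊆ Set.range (mv B))
    -- extreme eigenvalues of AᵀA and BᵀB
    (hLA : IsLargestEigenvalue (Aᵀ * A) LA)
    (hlamB : IsSmallestEigenvalue (Bᵀ * B) lamB)
    (hLxpos : 0 < Lx) (hLypos : 0 < Ly) (hβpos : 0 < β)
    -- parameter choice (★)
    (hLx : Lx ≥ Lg + β * LA + 6 * (Lg + Lh) ^ 2 + 1)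
    (hLy : Ly ≥ (Lg + Lh) + (Lg + Lh) ^ 2 + 3)
    (hCm : Cm = (Ly + (Lg + Lh) ^ 2) / 2)
    (hβ : β ≥ max (max ((Lg + Lh + Ly + 2) / lamB)
        (3 * ((Lg + Lh) ^ 2 + Ly ^ 2) / (lamB * Cm))) (3 * Ly ^ 2 / lamB))
    -- g does not depend on y
    (hgconst : ∀ (x' : Vec p) (y₁ y₂ : Vec q), g x' y₁ = g x' y₂)
    -- Algorithm 1 iterations
    (hxmin : ∀ (k : ℕ) (x' : Vec p),
      fbar f g A B β Lx (x k) (y k) (γ k) (x (k + 1)) ≤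
        fbar f g A B β Lx (x k) (y k) (γ k) x')
    (hymin : ∀ (k : ℕ) (y' : Vec q),
      hbar g h A B β Ly (x (k + 1)) (y k) (γ k) (y (k + 1)) ≤
        hbar g h A B β Ly (x (k + 1)) (y k) (γ k) y')
    (hγup : ∀ k : ℕ, γ (k + 1) = γ k + β • (mv A (x (k + 1)) + mv B (y (k + 1)))) :
    ∃ M : ℝ, ∀ k : ℕ, ‖γ k‖ ≤ M := by
  classical
  obtain ⟨⟨vA, hvA0, hvAeq⟩, hLAmax⟩ := hLA
  obtain ⟨⟨vB, hvB0, hvBeq⟩, hlamBmin⟩ := hlamB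
  have hq0 : q ≠ 0 := by rintro rfl; exact hvB0 (funext fun i => i.elim0)
  have hp0 : p ≠ 0 := by rintro rfl; exact hvA0 (funext fun i => i.elim0)
  -- Lh, Lg nonneg
  have hLh0 : 0 ≤ Lh := by
    set y' : Vec q := EuclideanSpace.single ⟨0, Nat.pos_of_ne_zero hq0⟩ (1:ℝ) with hy'
    have h1 := hh.2 y' 0
    rw [sub_zero] at h1
    have h2 : ‖y'‖ = 1 := by rw [hy', EuclideanSpace.norm_single]; norm_num
    rw [h2, mul_one] at h1
    exact le_trans (norm_nonneg _) h1
  have hLg0 : 0 ≤ Lg := by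
    set x' : Vec p := EuclideanSpace.single ⟨0, Nat.pos_of_ne_zero hp0⟩ (1:ℝ) with hx'
    have h1 := hg.2.2 x' 0 0 0
    have h2 : ‖x' - 0‖ = 1 := by rw [sub_zero, hx', EuclideanSpace.norm_single]; norm_num
    rw [h2] at h1
    have h3 : Real.sqrt ((1:ℝ) ^ 2 + ‖(0:Vec q) - 0‖ ^ 2) = 1 := by
      simp
    rw [h3, mul_one] at h1
    exact le_trans (Real.sqrt_nonneg _) h1
  -- spectral bounds
  have hAh : (Aᵀ * A).IsHermitian := Matrix.isHermitian_conjTranspose_mul_self A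
  have hBh : (Bᵀ * B).IsHermitian := Matrix.isHermitian_conjTranspose_mul_self B
  have hSA : ∀ v : Vec p, ‖mv A v‖ ^ 2 ≤ LA * ‖v‖ ^ 2 := fun v => by
    rw [← norm_mv_sq_eq]; exact herm_quad_le _ hAh LA hLAmax v
  have hSB : ∀ v : Vec q, lamB * ‖v‖ ^ 2 ≤ ‖mv B v‖ ^ 2 := fun v => by
    rw [← norm_mv_sq_eq]; exact herm_quad_ge _ hBh lamB hlamBmin v
  -- B injective, lamB positive
  have hker : LinearMap.ker B.mulVecLin = ⊥ := by
    have h1 := LinearMap.finrank_range_add_finrank_ker B.mulVecLin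
    rw [Module.finrank_fin_fun] at h1
    have h2 : Module.finrank ℝ (LinearMap.range B.mulVecLin) = q := hrank
    rw [h2] at h1
    exact Submodule.finrank_eq_zero.mp (by omega)
  have hBinj : ∀ u : Vec q, mv B u = 0 → u = 0 := by
    intro u hu
    have : u.ofLp ∈ LinearMap.ker B.mulVecLin := by
      rw [LinearMap.mem_ker]; exact congrArg WithLp.ofLp hu
    rw [hker] at this; exact congrArg (WithLp.toLp 2) this
  have hlamBpos : 0 < lamB := by
    let vBq : Vec q := WithLp.toLp 2 vB
    have hvB0q : vBq ≠ 0 := fun hz => hvB0 (congrArg WithLp.ofLp hz)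
    have h1 : mv (Bᵀ * B) vBq = lamB • vBq := by unfold mv; rw [hvBeq]; rfl
    have h2 : ⟪vBq, mv (Bᵀ * B) vBq⟫ = lamB * ‖vBq‖ ^ 2 := by
      rw [h1, real_inner_smul_right, real_inner_self_eq_norm_sq]
    rw [norm_mv_sq_eq] at h2
    have h3 : mv B vBq ≠ 0 := fun hz => hvB0q (hBinj vBq hz)
    have h4 : 0 < ‖mv B vBq‖ := norm_pos_iff.2 h3
    have h5 : 0 < ‖vBq‖ := norm_pos_iff.2 hvB0q
    nlinarith [h2, h4, h5]
  -- scalar facts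
  have hLy3 : 3 ≤ Ly := by nlinarith [sq_nonneg (Lg + Lh)]
  have hLhLy : Lh ≤ Ly := by nlinarith [sq_nonneg (Lg + Lh)]
  have hβl1 : Lg + Lh + Ly + 2 ≤ β * lamB := by
    have ha : (Lg + Lh + Ly + 2) / lamB ≤ β :=
      le_trans (le_trans (le_max_left _ _) (le_max_left _ _)) hβ
    have := (div_le_iff₀ hlamBpos).mp ha
    linarith [this]
  have hβl3 : 3 * Ly ^ 2 ≤ β * lamB := by
    have ha : 3 * Ly ^ 2 / lamB ≤ β := le_trans (le_max_right _ _) hβ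
    have := (div_le_iff₀ hlamBpos).mp ha
    linarith [this]
  obtain ⟨clb, hclb⟩ := hlb
  -- grady vanishes
  have hgrady0 : ∀ (a : Vec p) (b : Vec q), grady g a b = 0 := by
    intro a b
    have hc : g a = fun _ => g a b := funext fun z => hgconst a z b
    rw [grady, hc]
    apply gradient_const
  -- descent lemmas
  have hdesc : ∀ a b : Vec q, h b ≤ h a + ⟪gradient h a, b - a⟫ + Lh / 2 * ‖b - a‖ ^ 2 := by
    intro a b
    have h1 := descent_lemma h Lh hLh0 hh.1 hh.2 a (b - a)
    have e : a + (b - a) = b := by abel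
    rwa [e] at h1
  have hgxlip : ∀ (Y : Vec q) (a b : Vec p), ‖gradx g a Y - gradx g b Y‖ ≤ Lg * ‖a - b‖ := by
    intro Y a b
    have h1 := hg.2.2 a b Y Y
    rw [hgrady0, hgrady0, sub_self, norm_zero, sub_self, norm_zero] at h1
    have h2 : Real.sqrt (‖gradx g a Y - gradx g b Y‖ ^ 2 + 0 ^ 2) = ‖gradx g a Y - gradx g b Y‖ := by
      rw [show (0:ℝ) ^ 2 = 0 by norm_num, add_zero, Real.sqrt_sq (norm_nonneg _)]
    have h3 : Real.sqrt (‖a - b‖ ^ 2 + 0 ^ 2) = ‖a - b‖ := by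
      rw [show (0:ℝ) ^ 2 = 0 by norm_num, add_zero, Real.sqrt_sq (norm_nonneg _)]
    rw [h2, h3] at h1
    exact h1
  have hgdesc : ∀ (Y : Vec q) (a b : Vec p), g b Y ≤ g a Y + ⟪gradx g a Y, b - a⟫ + Lg / 2 * ‖b - a‖ ^ 2 := by
    intro Y a b
    have h1 := descent_lemma (fun x' => g x' Y) Lg hLg0 (hg.1 Y) (fun a b => hgxlip Y a b) a (b - a)
    have e : a + (b - a) = b := by abel
    rwa [e] at h1
  -- first order condition of the y-step
  have hfoc0 : ∀ k : ℕ,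
      mv Bᵀ (γ k) + Ly • (y (k+1) - y k) + β • mv Bᵀ (mv A (x (k+1)) + mv B (y (k+1))) +
        (grady g (x (k+1)) (y k) + gradient h (y k)) = 0 := by
    intro k
    have hkey : ∀ (v : Vec q) (t : ℝ), 0 ≤ t * ⟪mv Bᵀ (γ k) + Ly • (y (k+1) - y k) +
        β • mv Bᵀ (mv A (x (k+1)) + mv B (y (k+1))) + (grady g (x (k+1)) (y k) + gradient h (y k)), v⟫
        + t ^ 2 * (Ly / 2 * ‖v‖ ^ 2 + β / 2 * ‖mv B v‖ ^ 2) := by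
      intro v t
      have h1 := hymin k (y (k+1) + t • v)
      rw [hbar_expand] at h1
      linarith
    exact inner_self_eq_zero.mp (quadratic_zero _ _ (hkey _))
  have hfoc : ∀ k : ℕ, mv Bᵀ (γ (k+1)) = -(Ly • (y (k+1) - y k)) - gradient h (y k) := by
    intro k
    have h0 := hfoc0 k
    rw [hgrady0, zero_add] at h0
    have h3 : mv Bᵀ (γ (k+1)) = mv Bᵀ (γ k) + β • mv Bᵀ (mv A (x (k+1)) + mv B (y (k+1))) := by
      rw [hγup k, mv_add, mv_smul]
    rw [h3]
    have h5 : mv Bᵀ (γ k) + β • mv Bᵀ (mv A (x (k+1)) + mv B (y (k+1))) =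
        (mv Bᵀ (γ k) + Ly • (y (k+1) - y k) + β • mv Bᵀ (mv A (x (k+1)) + mv B (y (k+1))) +
          gradient h (y k)) - Ly • (y (k+1) - y k) - gradient h (y k) := by abel
    rw [h5, h0]
    abel
  -- y-descent with strong convexity
  have hydesc : ∀ k : ℕ, Lagr β g f h A B (x (k+1)) (y (k+1)) (γ k) ≤
      Lagr β g f h A B (x (k+1)) (y k) (γ k) - (Ly - Lh/2 + β * lamB / 2) * ‖y (k+1) - y k‖ ^ 2 := by
    intro k
    have hvec0 := hfoc0 k
    have hexp := hbar_expand g h A B β Ly (x (k+1)) (y k) (γ k) (y (k+1)) (y k - y (k+1)) 1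
    have e : y (k+1) + (1:ℝ) • (y k - y (k+1)) = y k := by rw [one_smul]; abel
    rw [e, hvec0, inner_zero_left] at hexp
    simp only [hbar, sub_self, norm_zero, inner_zero_left, hgrady0, zero_add] at hexp
    have hd := hdesc (y k) (y (k+1))
    have hco : ⟪gradient h (y k), y (k+1) - y k⟫ = ⟪y (k+1) - y k, gradient h (y k)⟫ :=
      real_inner_comm _ _
    have hnn : ‖y k - y (k+1)‖ = ‖y (k+1) - y k‖ := norm_sub_rev _ _
    have hBB : β/2 * (lamB * ‖y k - y (k+1)‖ ^ 2) ≤ β/2 * ‖mv B (y k - y (k+1))‖ ^ 2 :=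
      mul_le_mul_of_nonneg_left (hSB _) (by positivity)
    rw [hnn] at hBB
    rw [hnn] at hexp
    have hge : g (x (k+1)) (y (k+1)) = g (x (k+1)) (y k) := hgconst _ _ _
    simp only [Lagr, inner_add_right]
    rw [hge]
    linarith [hexp, hd, hBB, hco]
  -- x-descent
  have hxdesc : ∀ k : ℕ, Lagr β g f h A B (x (k+1)) (y k) (γ k) ≤
      Lagr β g f h A B (x k) (y k) (γ k) := by
    intro k
    have hf1 := hxmin k (x k)
    simp only [fbar, sub_self, norm_zero, inner_zero_left] at hf1
    have hgd := hgdesc (y k) (x k) (x (k+1))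
    have hco : ⟪gradx g (x k) (y k), x (k+1) - x k⟫ = ⟪x (k+1) - x k, gradx g (x k) (y k)⟫ :=
      real_inner_comm _ _
    -- split inner in hf1
    rw [inner_add_right (𝕜 := ℝ) (x (k+1) - x k) (gradx g (x k) (y k))
      (β • mv Aᵀ (mv A (x k) + mv B (y k))), real_inner_smul_right] at hf1
    have hadj : ⟪x (k+1) - x k, mv Aᵀ (mv A (x k) + mv B (y k))⟫ =
        ⟪mv A (x k) + mv B (y k), mv A (x (k+1) - x k)⟫ := by
      rw [real_inner_comm, inner_mv]
    rw [hadj] at hf1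
    -- expand quadratic
    have hAe : mv A (x (k+1)) + mv B (y k) = (mv A (x k) + mv B (y k)) + mv A (x (k+1) - x k) := by
      rw [mv_sub]; abel
    have hq : ‖mv A (x (k+1)) + mv B (y k)‖ ^ 2 = ‖mv A (x k) + mv B (y k)‖ ^ 2 +
        2 * ⟪mv A (x k) + mv B (y k), mv A (x (k+1) - x k)⟫ + ‖mv A (x (k+1) - x k)‖ ^ 2 := by
      rw [hAe, norm_add_sq_real]
    have hq2 : β/2 * ‖mv A (x (k+1)) + mv B (y k)‖ ^ 2 = β/2 * ‖mv A (x k) + mv B (y k)‖ ^ 2 +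
        β * ⟪mv A (x k) + mv B (y k), mv A (x (k+1) - x k)⟫ + β/2 * ‖mv A (x (k+1) - x k)‖ ^ 2 := by
      rw [mul_comm (β/2) (‖mv A (x (k+1)) + mv B (y k)‖ ^ 2), hq]; ring
    have hSA2 : β/2 * ‖mv A (x (k+1) - x k)‖ ^ 2 ≤ β/2 * (LA * ‖x (k+1) - x k‖ ^ 2) :=
      mul_le_mul_of_nonneg_left (hSA _) (by positivity)
    have hcoef : Lg + β * LA ≤ Lx := by nlinarith [sq_nonneg (Lg + Lh)]
    simp only [Lagr, inner_add_right]
    linarith [hf1, hgd, hq2, hSA2, hco,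
      mul_nonneg (by linarith : (0:ℝ) ≤ Lx - Lg - β * LA) (sq_nonneg ‖x (k+1) - x k‖)]
  -- dual update identity
  have hγstep : ∀ k : ℕ, Lagr β g f h A B (x (k+1)) (y (k+1)) (γ (k+1)) =
      Lagr β g f h A B (x (k+1)) (y (k+1)) (γ k) +
        β * ‖mv A (x (k+1)) + mv B (y (k+1))‖ ^ 2 := by
    intro k
    simp only [Lagr]
    rw [hγup k, inner_add_left, real_inner_smul_left, real_inner_self_eq_norm_sq]
    ring
  -- dual ascent bound
  have hdual : ∀ j : ℕ, β * ‖mv A (x (j+2)) + mv B (y (j+2))‖ ^ 2 ≤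
      ‖y (j+2) - y (j+1)‖ ^ 2 + 2 * ‖y (j+1) - y j‖ ^ 2 := by
    intro j
    set R : Vec n := mv A (x (j+2)) + mv B (y (j+2)) with hR
    obtain ⟨w, hw⟩ : ∃ w : Vec q, mv B w = R := by
      obtain ⟨wa, hwa⟩ := himg (Set.mem_range_self (x (j+2)))
      exact ⟨wa + y (j+2), by rw [mv_add, hwa]⟩
    have h1 : mv Bᵀ (β • R) = mv Bᵀ (γ (j+2)) - mv Bᵀ (γ (j+1)) := by
      have : γ (j+2) = γ (j+1) + β • R := hγup (j+1)
      rw [this, mv_add, mv_smul]; abel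
    rw [hfoc (j+1), hfoc j] at h1
    have h2 : ‖mv Bᵀ (β • R)‖ ≤ Ly * ‖y (j+2) - y (j+1)‖ +
        (Ly * ‖y (j+1) - y j‖ + Lh * ‖y (j+1) - y j‖) := by
      rw [h1]
      have e2 : (-(Ly • (y (j+2) - y (j+1))) - gradient h (y (j+1))) -
          (-(Ly • (y (j+1) - y j)) - gradient h (y j)) =
          -(Ly • (y (j+2) - y (j+1))) +
            (Ly • (y (j+1) - y j) + (gradient h (y j) - gradient h (y (j+1)))) := by abel
      rw [e2]
      refine le_trans (norm_add_le _ _) (add_le_add ?_ (le_trans (norm_add_le _ _) (add_le_add ?_ ?_)))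
      · rw [norm_neg, norm_smul, Real.norm_eq_abs, abs_of_pos hLypos]
      · rw [norm_smul, Real.norm_eq_abs, abs_of_pos hLypos]
      · have h3 := hh.2 (y j) (y (j+1))
        rwa [show ‖y j - y (j+1)‖ = ‖y (j+1) - y j‖ from norm_sub_rev _ _] at h3
    have h3 : lamB * ‖β • R‖ ^ 2 ≤ ‖mv Bᵀ (β • R)‖ ^ 2 := by
      have hbw : β • R = mv B (β • w) := by rw [mv_smul, hw]
      rw [hbw]
      exact mvB_lower_of_range B lamB hSB (le_of_lt hlamBpos) _
    have h4 : ‖β • R‖ ^ 2 = β^2 * ‖R‖^2 := by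
      rw [norm_smul, Real.norm_eq_abs, mul_pow, sq_abs]
    have h5 : ‖mv Bᵀ (β • R)‖ ^ 2 ≤ (Ly * ‖y (j+2) - y (j+1)‖ +
        (Ly * ‖y (j+1) - y j‖ + Lh * ‖y (j+1) - y j‖)) ^ 2 :=
      pow_le_pow_left₀ (norm_nonneg _) h2 2
    have h6 : β * lamB * (β * ‖R‖^2) ≤ 3*Ly^2*‖y (j+2) - y (j+1)‖^2 +
        (3*Ly^2+3*Lh^2)*‖y (j+1) - y j‖^2 := by
      nlinarith [h3, h4, h5, sq_nonneg (Ly * ‖y (j+2) - y (j+1)‖ - Ly * ‖y (j+1) - y j‖),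
        sq_nonneg (Ly * ‖y (j+2) - y (j+1)‖ - Lh * ‖y (j+1) - y j‖),
        sq_nonneg (Ly * ‖y (j+1) - y j‖ - Lh * ‖y (j+1) - y j‖)]
    have hβR : (0:ℝ) ≤ β * ‖R‖^2 := by positivity
    have h7 : 3*Ly^2 * (β * ‖R‖^2) ≤ β*lamB*(β*‖R‖^2) :=
      mul_le_mul_of_nonneg_right hβl3 hβR
    have h8 : (3:ℝ)*Ly^2+3*Lh^2 ≤ 3*Ly^2*2 := by nlinarith [hLhLy, hLh0]
    have hLypos2 : (0:ℝ) < 3*Ly^2 := by positivity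
    have h9 : 3*Ly^2 * (β * ‖R‖^2) ≤ 3*Ly^2 * (‖y (j+2) - y (j+1)‖^2 + 2*‖y (j+1) - y j‖^2) := by
      nlinarith [h6, h7, h8, sq_nonneg ‖y (j+1) - y j‖]
    have := (mul_le_mul_iff_right₀ hLypos2).mp h9
    linarith
  -- Lyapunov sequence
  set Lk : ℕ → ℝ := fun k => Lagr β g f h A B (x k) (y k) (γ k) with hLk
  set dd : ℕ → ℝ := fun k => ‖y (k+1) - y k‖ ^ 2 with hdd
  have hdd0 : ∀ k, 0 ≤ dd k := fun k => sq_nonneg _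
  set E : ℕ → ℝ := fun k => Lk k + 2 * dd (k-1) with hE
  have hstep : ∀ j : ℕ, E (j+2) + 2 * dd (j+1) ≤ E (j+1) := by
    intro j
    have h1 := hydesc (j+1)
    have h2 := hxdesc (j+1)
    have h3 := hγstep (j+1)
    have h4 := hdual j
    simp only [show j+1+1 = j+2 from rfl] at h1 h2 h3
    have hcy : 5 ≤ Ly - Lh/2 + β * lamB / 2 := by nlinarith [hβl3, hLy3, hLhLy]
    have hprod : 5 * ‖y (j+2) - y (j+1)‖ ^ 2 ≤
        (Ly - Lh/2 + β * lamB / 2) * ‖y (j+2) - y (j+1)‖ ^ 2 :=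
      mul_le_mul_of_nonneg_right hcy (sq_nonneg _)
    simp only [hE, hLk, hdd, show j+2-1 = j+1 from rfl, show j+1-1 = j from rfl,
      show j+1+1 = j+2 from rfl]
    linarith [h1, h2, h3, h4, hprod]
  have hEdec : ∀ m : ℕ, E (m+2) ≤ E (m+1) := fun m => by
    have := hstep m; have := hdd0 (m+1); linarith
  have hEmono : ∀ k : ℕ, E (k+1) ≤ E 1 := by
    intro k
    induction k with
    | zero => exact le_refl _
    | succ m ih => exact le_trans (hEdec m) ih
  -- shadow sequence
  have hsex : ∀ k : ℕ, ∃ s : Vec q, mv B s = mv A (x k) + mv B (y k) := by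
    intro k
    obtain ⟨wa, hwa⟩ := himg (Set.mem_range_self (x k))
    exact ⟨wa + y k, by rw [mv_add, hwa]⟩
  choose s hs using hsex
  have hsn : ∀ k, lamB * ‖s k‖ ^ 2 ≤ ‖mv A (x k) + mv B (y k)‖ ^ 2 := by
    intro k; rw [← hs k]; exact hSB (s k)
  have hfeas : ∀ k, mv A (x k) + mv B (y k - s k) = 0 := by
    intro k; rw [mv_sub, hs k]; abel
  set Φ : ℕ → ℝ := fun k => g (x k) (y k - s k) + f (x k) + h (y k - s k) with hΦ
  have hΦlb : ∀ k, clb ≤ Φ k := fun k => hclb _ _ (hfeas k)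
  -- the sandwich estimate
  have hsand : ∀ j : ℕ, Φ (j+1) - dd j ≤ Lk (j+1) := by
    intro j
    have h1 : ⟪γ (j+1), mv A (x (j+1)) + mv B (y (j+1))⟫ = ⟪mv Bᵀ (γ (j+1)), s (j+1)⟫ := by
      rw [← hs (j+1), inner_mv]
    rw [hfoc j, inner_sub_left, inner_neg_left, real_inner_smul_left] at h1
    have h2 := hdesc (y (j+1)) (y (j+1) - s (j+1))
    have e : y (j+1) - s (j+1) - y (j+1) = -s (j+1) := by abel
    rw [e, inner_neg_right, norm_neg] at h2
    -- inner bounds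
    have hub := hh.2 (y (j+1)) (y j)
    have c1 : -(Lh * ‖y (j+1) - y j‖ * ‖s (j+1)‖) ≤
        ⟪gradient h (y (j+1)) - gradient h (y j), s (j+1)⟫ := by
      have ha := abs_real_inner_le_norm (gradient h (y (j+1)) - gradient h (y j)) (s (j+1))
      have hb : ‖gradient h (y (j+1)) - gradient h (y j)‖ * ‖s (j+1)‖ ≤
          Lh * ‖y (j+1) - y j‖ * ‖s (j+1)‖ :=
        mul_le_mul_of_nonneg_right hub (norm_nonneg _)
      have hc := neg_abs_le ⟪gradient h (y (j+1)) - gradient h (y j), s (j+1)⟫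
      linarith
    have c2 : ⟪y (j+1) - y j, s (j+1)⟫ ≤ ‖y (j+1) - y j‖ * ‖s (j+1)‖ := real_inner_le_norm _ _
    have c2' : Ly * ⟪y (j+1) - y j, s (j+1)⟫ ≤ Ly * (‖y (j+1) - y j‖ * ‖s (j+1)‖) :=
      mul_le_mul_of_nonneg_left c2 (le_of_lt hLypos)
    -- Young and absorption
    have hyoung : (Lh + Ly) * (‖y (j+1) - y j‖ * ‖s (j+1)‖) ≤
        ‖y (j+1) - y j‖ ^ 2 + (Lh + Ly)^2/4 * ‖s (j+1)‖ ^ 2 := by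
      nlinarith [sq_nonneg (‖y (j+1) - y j‖ - (Lh + Ly)/2 * ‖s (j+1)‖)]
    have habs : (Lh+Ly)^2/4 + Lh/2 ≤ β*lamB/2 := by nlinarith [hβl3, hLhLy, hLh0, hLy3]
    have habs2 : ((Lh+Ly)^2/4 + Lh/2) * ‖s (j+1)‖^2 ≤
        β/2 * ‖mv A (x (j+1)) + mv B (y (j+1))‖ ^ 2 := by
      have t1 : ((Lh+Ly)^2/4 + Lh/2) * ‖s (j+1)‖^2 ≤ (β*lamB/2) * ‖s (j+1)‖^2 :=
        mul_le_mul_of_nonneg_right habs (sq_nonneg _)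
      have t2 : β/2 * (lamB * ‖s (j+1)‖ ^ 2) ≤ β/2 * ‖mv A (x (j+1)) + mv B (y (j+1))‖ ^ 2 :=
        mul_le_mul_of_nonneg_left (hsn (j+1)) (by positivity)
      nlinarith [t1, t2]
    -- inner split in h1 : ⟪Gh yj, s⟫ with sign
    have hge : g (x (j+1)) (y (j+1)) = g (x (j+1)) (y (j+1) - s (j+1)) := hgconst _ _ _
    simp only [hΦ, hLk, Lagr, hdd]
    rw [hge]
    -- combine with c1 written via inner_sub_left
    have c1' : ⟪gradient h (y (j+1)), s (j+1)⟫ - ⟪gradient h (y j), s (j+1)⟫ ≥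
        -(Lh * ‖y (j+1) - y j‖ * ‖s (j+1)‖) := by
      rw [← inner_sub_left]; exact c1
    linarith [h1, h2, c1', c2', hyoung, habs2]
  -- lower and upper bounds on Lk
  have hEgeL : ∀ k : ℕ, Lk k ≤ E k := by
    intro k; simp only [hE]; linarith [hdd0 (k-1)]
  have hLup : ∀ j : ℕ, Lk (j+1) ≤ E 1 := fun j => le_trans (hEgeL (j+1)) (hEmono j)
  have hLlow : ∀ j : ℕ, 2*clb - E 1 ≤ Lk (j+2) := by
    intro j
    have h1 := hstep j
    have h2 := hEmono j
    have h3 := hEgeL (j+2)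
    have h4 := hsand (j+1)
    have h5 := hΦlb (j+2)
    simp only [show j+1+1 = j+2 from rfl] at h4
    -- 2 dd (j+1) ≤ E (j+1) - E (j+2) ≤ E 1 - Lk (j+2)
    -- Lk (j+2) ≥ Φ (j+2) - dd (j+1) ≥ clb - (E 1 - Lk (j+2))/2
    linarith
  set Dmax : ℝ := max (dd 0) (E 1 - clb) with hDmax
  have hddb : ∀ k : ℕ, dd k ≤ Dmax := by
    intro k
    cases k with
    | zero => exact le_max_left _ _
    | succ m =>
      have h1 := hstep m
      have h2 := hEmono m
      have h3 := hEgeL (m+2)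
      have h4 := hLlow m
      refine le_trans ?_ (le_max_right _ _)
      linarith
  have hΦup : ∀ m : ℕ, Φ (m+2) ≤ E 1 + Dmax := by
    intro m
    have h1 := hsand (m+1)
    simp only [show m+1+1 = m+2 from rfl] at h1
    have h2 := hLup (m+1)
    simp only [show m+1+1 = m+2 from rfl] at h2
    have h3 := hddb (m+1)
    linarith
  -- bound on s
  obtain ⟨SM, hSM0, hSMb⟩ : ∃ SM : ℝ, 0 ≤ SM ∧ ∀ k, ‖s k‖ ≤ SM := by
    set RM2 : ℝ := max (max (‖mv A (x 0) + mv B (y 0)‖^2) (‖mv A (x 1) + mv B (y 1)‖^2))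
      (3*Dmax/β) with hRM2
    have hrb : ∀ k : ℕ, ‖mv A (x k) + mv B (y k)‖ ^ 2 ≤ RM2 := by
      intro k
      match k with
      | 0 => exact le_trans (le_max_left _ _) (le_max_left _ _)
      | 1 => exact le_trans (le_max_right _ _) (le_max_left _ _)
      | (j+2) =>
        refine le_trans ?_ (le_max_right _ _)
        have h1 := hdual j
        have h2 := hddb (j+1)
        have h3 := hddb j
        have h4 : dd (j+1) = ‖y (j+2) - y (j+1)‖^2 := by
          simp only [hdd, show j+1+1 = j+2 from rfl]
        have h5 : dd j = ‖y (j+1) - y j‖^2 := by simp only [hdd]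
        rw [h4] at h2; rw [h5] at h3
        rw [le_div_iff₀ hβpos]
        nlinarith [h1, h2, h3]
    have hsk2 : ∀ k, ‖s k‖^2 ≤ RM2 / lamB := by
      intro k
      rw [le_div_iff₀ hlamBpos]
      nlinarith [hsn k, hrb k]
    refine ⟨Real.sqrt (RM2 / lamB), Real.sqrt_nonneg _, fun k => ?_⟩
    rw [show ‖s k‖ = Real.sqrt (‖s k‖^2) from (Real.sqrt_sq (norm_nonneg _)).symm]
    exact Real.sqrt_le_sqrt (hsk2 k)
  -- y is bounded
  obtain ⟨Y, hY⟩ : ∃ Y : ℝ, ∀ k, ‖y k‖ ≤ Y := by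
    by_contra hny
    push_neg at hny
    set C : ℝ := max (‖y 0‖) (‖y 1‖) + 1 + SM with hC
    have hKex : ∀ j : ℕ, ∃ k : ℕ, (j : ℝ) + C < ‖y k‖ := fun j => hny ((j:ℝ) + C)
    choose K hK using hKex
    have hK2 : ∀ j, 2 ≤ K j := by
      intro j
      by_contra hlt
      push_neg at hlt
      have hj0 : (0:ℝ) ≤ (j:ℝ) := Nat.cast_nonneg j
      have hb : ‖y (K j)‖ ≤ max (‖y 0‖) (‖y 1‖) := by
        interval_cases hKj : K j
        · exact le_max_left _ _
        · exact le_max_right _ _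
      have := hK j
      rw [hC] at this
      linarith
    have hfeasK : ∀ j, mv A (x (K j)) + mv B (y (K j) - s (K j)) = 0 := fun j => hfeas (K j)
    have htend : Tendsto (fun j : ℕ => ‖y (K j) - s (K j)‖) atTop atTop := by
      apply tendsto_atTop_mono (fun j => ?_) 
      · exact tendsto_natCast_atTop_atTop
      · -- (j:ℝ) ≤ ‖y (K j) - s (K j)‖
        have h1 := norm_sub_norm_le (y (K j)) (s (K j))
        have h2 := hSMb (K j)
        have h3 := hK j
        rw [hC] at h3
        have h4 : ‖y 0‖ ≤ max (‖y 0‖) (‖y 1‖) := le_max_left _ _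
        have h5 : (0:ℝ) ≤ max (‖y 0‖) (‖y 1‖) := le_trans (norm_nonneg _) h4
        linarith
    have hco2 := hcoercive (fun j => x (K j)) (fun j => y (K j) - s (K j)) hfeasK htend
    have hup : ∀ j, g (x (K j)) (y (K j) - s (K j)) + f (x (K j)) + h (y (K j) - s (K j)) ≤
        E 1 + Dmax := by
      intro j
      obtain ⟨m, hm⟩ : ∃ m, K j = m + 2 := ⟨K j - 2, by have := hK2 j; omega⟩
      have h1 := hΦup m
      simp only [hΦ] at h1
      rw [hm]
      exact h1
    obtain ⟨j, hj⟩ := (hco2.eventually (eventually_gt_atTop (E 1 + Dmax))).exists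
    exact absurd (hup j) (not_le.mpr hj)
  -- gradient bound along the iterates
  have hGb : ∀ k, ‖gradient h (y k)‖ ≤ ‖gradient h 0‖ + Lh * Y := by
    intro k
    have h1 := hh.2 (y k) 0
    rw [sub_zero] at h1
    have h2 : ‖gradient h (y k)‖ ≤ ‖gradient h (y k) - gradient h 0‖ + ‖gradient h 0‖ := by
      have e : gradient h (y k) = (gradient h (y k) - gradient h 0) + gradient h 0 := by abel
      calc ‖gradient h (y k)‖ = ‖(gradient h (y k) - gradient h 0) + gradient h 0‖ := by rw [← e]
        _ ≤ ‖gradient h (y k) - gradient h 0‖ + ‖gradient h 0‖ := norm_add_le _ _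
    have h3 : Lh * ‖y k‖ ≤ Lh * Y := mul_le_mul_of_nonneg_left (hY k) hLh0
    linarith
  have hδb : ∀ k, ‖y (k+1) - y k‖ ≤ 2*Y := by
    intro k
    have h1 := norm_sub_le (y (k+1)) (y k)
    have h2 := hY (k+1); have h3 := hY k
    linarith
  set CB : ℝ := max (‖mv Bᵀ (γ 0)‖) (Ly * (2*Y) + (‖gradient h 0‖ + Lh * Y)) with hCB
  have hBT : ∀ k, ‖mv Bᵀ (γ k)‖ ≤ CB := by
    intro k
    match k with
    | 0 => exact le_max_left _ _
    | (k+1) =>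
      refine le_trans ?_ (le_max_right _ _)
      rw [hfoc k]
      refine le_trans (norm_sub_le _ _) (add_le_add ?_ (hGb k))
      rw [norm_neg, norm_smul, Real.norm_eq_abs, abs_of_pos hLypos]
      exact mul_le_mul_of_nonneg_left (hδb k) (le_of_lt hLypos)
  have hγrange : ∀ k, ∃ u : Vec q, γ k = γ 0 + mv B u := by
    intro k
    induction k with
    | zero =>
      refine ⟨0, ?_⟩
      have : mv B (0 : Vec q) = 0 := by
        simp [mv, Matrix.mulVec_zero, WithLp.toLp_zero]
      rw [this, add_zero]
    | succ m ih =>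
      obtain ⟨u, hu⟩ := ih
      refine ⟨u + β • s (m+1), ?_⟩
      rw [hγup m, hu, mv_add, mv_smul, hs (m+1)]
      abel
  refine ⟨‖γ 0‖ + Real.sqrt ((2*CB)^2 / lamB), fun k => ?_⟩
  obtain ⟨u, hu⟩ := hγrange k
  have h1 : ‖γ k‖ ≤ ‖γ 0‖ + ‖mv B u‖ := by
    rw [hu]; exact norm_add_le _ _
  have h2 : lamB * ‖mv B u‖ ^ 2 ≤ ‖mv Bᵀ (mv B u)‖ ^ 2 :=
    mvB_lower_of_range B lamB hSB (le_of_lt hlamBpos) u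
  have h3 : mv Bᵀ (mv B u) = mv Bᵀ (γ k) - mv Bᵀ (γ 0) := by
    have e : mv B u = γ k - γ 0 := by rw [hu]; abel
    rw [e, mv_sub]
  have h4 : ‖mv Bᵀ (mv B u)‖ ≤ 2*CB := by
    rw [h3]
    refine le_trans (norm_sub_le _ _) ?_
    have := hBT k; have := hBT 0
    have h0 : ‖mv Bᵀ (γ 0)‖ ≤ CB := le_max_left _ _
    linarith [hBT k]
  have h5 : ‖mv B u‖ ^ 2 ≤ (2*CB)^2 / lamB := by
    rw [le_div_iff₀ hlamBpos]
    have h6 : ‖mv Bᵀ (mv B u)‖ ^ 2 ≤ (2*CB)^2 :=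
      pow_le_pow_left₀ (norm_nonneg _) h4 2
    nlinarith [h2, h6]
  have h7 : ‖mv B u‖ ≤ Real.sqrt ((2*CB)^2 / lamB) := by
    rw [show ‖mv B u‖ = Real.sqrt (‖mv B u‖^2) from (Real.sqrt_sq (norm_nonneg _)).symm]
    exact Real.sqrt_le_sqrt h5
  linarith
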